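/- Let z ∈ V with z ≠ 0 and g(z,z) = 0, and let B be a symmetric bilinear form on V satisfying B(z,u) = 0 for all u ∈ V. If e₃, …, e_n ∈ V are vectors with g(e_i,e_j) = −δ_{ij} and g(z,e_i) = 0 for all i, j ∈ {3,…,n}, then the g-trace of B equals −∑_{i=3}^{n} B(e_i,e_i) (this is the computational content of Lemma 4.1, expressing the Ricci scalar along a lightlike direction as minus the sum over a spacelike orthonormal completion). -/

import Mathlib

open Set

/-- Lemma 4.1 (computational content): in a Lorentzian vector space `(V, g)`, if `z` is
a nonzero `g`-null vector, `B` is a symmetric bilinear form with `B(z,·) = 0`, and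
`e₃, …, e_n` is a `g`-orthonormal spacelike family `g`-orthogonal to `z`, then the
`g`-trace of `B` (the trace of the endomorphism `T` with `g(T u, w) = B(u,w)`) equals
`-∑ᵢ B(eᵢ, eᵢ)`. -/
theorem lorentz_trace_along_null_direction
    {V : Type} [AddCommGroup V] [Module ℝ V] [FiniteDimensional ℝ V]
    {n : ℕ} (hn : 2 ≤ n) (hdim : Module.finrank ℝ V = n)
    (g : V →ₗ[ℝ] V →ₗ[ℝ] ℝ) (hg_symm : ∀ u w : V, g u w = g w u)
    (f : Module.Basis (Fin n) ℝ V)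
    (hf : ∀ i j : Fin n, g (f i) (f j) =
      if i = j then (if (i : ℕ) = 0 then 1 else -1) else 0)
    (z : V) (hz0 : z ≠ 0) (hzz : g z z = 0)
    (B : V →ₗ[ℝ] V →ₗ[ℝ] ℝ) (hB_symm : ∀ u w : V, B u w = B w u)
    (hBz : ∀ u : V, B z u = 0)
    (e : Fin (n - 2) → V)
    (he : ∀ i j : Fin (n - 2), g (e i) (e j) = if i = j then -1 else 0)
    (hze : ∀ i : Fin (n - 2), g z (e i) = 0)
    (T : V →ₗ[ℝ] V) (hT : ∀ u w : V, g (T u) w = B u w) :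
    LinearMap.trace ℝ V T = -∑ i : Fin (n - 2), B (e i) (e i) := by
  classical
  -- nondegeneracy of g
  have hnd : ∀ v : V, (∀ u : V, g v u = 0) → v = 0 := by
    intro v hv
    have h0 : ∀ i : Fin n, f.repr v i = 0 := by
      intro i
      have h1 : g (f i) v = 0 := by rw [hg_symm]; exact hv (f i)
      have h2 : g (f i) v = f.repr v i * (if (i : ℕ) = 0 then 1 else -1) := by
        conv_lhs => rw [← f.sum_repr v]
        rw [map_sum]
        simp only [map_smul, smul_eq_mul, hf]
        rw [Finset.sum_eq_single i]
        · simp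
        · intro j _ hj
          simp [Ne.symm hj]
        · simp
      rw [h2] at h1
      rcases eq_or_ne (i : ℕ) 0 with h | h <;> simp [h] at h1 <;> linarith
    exact f.repr.map_eq_zero_iff.mp (by ext i; simpa using h0 i)
  -- find a vector pairing to 1 with z
  have hzex : ∃ u : V, g z u ≠ 0 := by
    by_contra h
    push_neg at h
    exact hz0 (hnd z h)
  obtain ⟨u, hu⟩ := hzex
  set w₁ : V := (g z u)⁻¹ • u with hw₁def
  have hzw₁ : g z w₁ = 1 := by
    simp [hw₁def, map_smul, inv_mul_cancel₀ hu]
  set w₂ : V := w₁ + ∑ i, (g w₁ (e i)) • e i with hw₂def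
  have hzw₂ : g z w₂ = 1 := by
    simp [hw₂def, map_add, map_sum, map_smul, hze, hzw₁]
  have hw₂e : ∀ j, g w₂ (e j) = 0 := by
    intro j
    simp only [hw₂def, map_add, LinearMap.add_apply, map_sum, LinearMap.sum_apply,
      map_smul, LinearMap.smul_apply, smul_eq_mul, he, mul_ite, mul_neg, mul_one, mul_zero]
    rw [Finset.sum_ite_eq' Finset.univ j]
    simp
  set w : V := w₂ - (g w₂ w₂ / 2) • z with hwdef
  have hw₂z : g w₂ z = 1 := by rw [hg_symm]; exact hzw₂
  have hzw : g z w = 1 := by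
    simp [hwdef, map_sub, map_smul, hzz, hzw₂]
  have hwz : g w z = 1 := by rw [hg_symm]; exact hzw
  have hww : g w w = 0 := by
    simp only [hwdef, map_sub, LinearMap.sub_apply, map_smul, LinearMap.smul_apply,
      smul_eq_mul, hzz, hzw₂, hw₂z]
    ring
  have hwe : ∀ j, g w (e j) = 0 := by
    intro j
    simp only [hwdef, map_sub, LinearMap.sub_apply, map_smul, LinearMap.smul_apply,
      smul_eq_mul, hze, hw₂e]
    ring
  have hez : ∀ j, g (e j) z = 0 := fun j => by rw [hg_symm]; exact hze j
  have hew : ∀ j, g (e j) w = 0 := fun j => by rw [hg_symm]; exact hwe j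
  -- build a basis (z, w, e₁, …)
  have hcard : Fintype.card (Fin 2 ⊕ Fin (n - 2)) = Module.finrank ℝ V := by
    simp [hdim]; omega
  have hli : LinearIndependent ℝ (Sum.elim ![z, w] e) := by
    rw [Fintype.linearIndependent_iff]
    intro c hc
    have key : ∀ x : V, (∑ j, c j * g x (Sum.elim ![z, w] e j)) = 0 := by
      intro x
      have h := congrArg (fun t => g x t) hc
      simpa [map_sum, map_smul] using h
    intro i
    rcases i with i | j
    · fin_cases i
      · have h := key w
        simpa [Fintype.sum_sum_type, Fin.sum_univ_two, hwz, hww, hwe] using h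
      · have h := key z
        simpa [Fintype.sum_sum_type, Fin.sum_univ_two, hzz, hzw, hze] using h
    · have h := key (e j)
      simp only [Fintype.sum_sum_type, Fin.sum_univ_two, Sum.elim_inl, Sum.elim_inr,
        Matrix.cons_val_zero, Matrix.cons_val_one, Matrix.head_cons,
        hez, hew, he, mul_ite, mul_neg, mul_one, mul_zero] at h
      rw [Finset.sum_ite_eq Finset.univ j] at h
      simp at h
      linarith
  let b : Module.Basis (Fin 2 ⊕ Fin (n - 2)) ℝ V :=
    basisOfLinearIndependentOfCardEqFinrank hli hcard
  have hb : ⇑b = Sum.elim ![z, w] e :=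
    coe_basisOfLinearIndependentOfCardEqFinrank hli hcard
  have hb0 : b (Sum.inl 0) = z := by rw [hb]; simp
  have hb1 : b (Sum.inl 1) = w := by rw [hb]; simp
  have hbe : ∀ j, b (Sum.inr j) = e j := by intro j; rw [hb]; simp
  -- coordinate formulas
  have hrz : ∀ x : V, b.repr x (Sum.inl 0) = g w x := by
    intro x
    conv_rhs => rw [← b.sum_repr x]
    simp [-Module.Basis.sum_repr, map_sum, map_smul, Fintype.sum_sum_type, Fin.sum_univ_two, hb0, hb1, hbe,
      hwz, hww, hwe]
  have hrw : ∀ x : V, b.repr x (Sum.inl 1) = g z x := by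
    intro x
    conv_rhs => rw [← b.sum_repr x]
    simp [-Module.Basis.sum_repr, map_sum, map_smul, Fintype.sum_sum_type, Fin.sum_univ_two, hb0, hb1, hbe,
      hzz, hzw, hze]
  have hre : ∀ (j : Fin (n - 2)) (x : V), b.repr x (Sum.inr j) = -(g (e j) x) := by
    intro j x
    have : g (e j) x = -(b.repr x (Sum.inr j)) := by
      conv_lhs => rw [← b.sum_repr x]
      simp only [map_add, map_sum, map_smul, smul_eq_mul, Fintype.sum_sum_type,
        Fin.sum_univ_two, hb0, hb1, hbe, hez, hew, he, mul_ite, mul_neg, mul_one, mul_zero]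
      rw [Finset.sum_ite_eq Finset.univ j]
      simp
    rw [this]; ring
  -- compute the trace
  have htr : LinearMap.trace ℝ V T = ∑ i : Fin 2 ⊕ Fin (n - 2), b.repr (T (b i)) i := by
    rw [LinearMap.trace_eq_matrix_trace ℝ b T, Matrix.trace]
    simp [Matrix.diag, LinearMap.toMatrix_apply]
  rw [htr, Fintype.sum_sum_type, Fin.sum_univ_two, hb0, hb1]
  have t1 : b.repr (T z) (Sum.inl 0) = 0 := by
    rw [hrz, hg_symm, hT, hBz]
  have t2 : b.repr (T w) (Sum.inl 1) = 0 := by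
    rw [hrw, hg_symm, hT, hB_symm, hBz]
  have t3 : ∀ j, b.repr (T (b (Sum.inr j))) (Sum.inr j) = -(B (e j) (e j)) := by
    intro j
    rw [hbe, hre, hg_symm, hT]
  simp only [t1, t2, t3]
  simp
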